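/- For all positive integers s and d, define the polynomial p_{s,d}(x) := 2^{-s} · Σ_{y ∈ {-1,1}^s, |y_1 + ... + y_s| ≤ d} T_{y_1 + ... + y_s}(x). Then p_{s,d} has degree at most d and satisfies sup_{x ∈ [-1,1]} |p_{s,d}(x) - x^s| ≤ 2·e^{-d²/(2s)}. In particular, for every δ > 0 and every d ≥ ⌈√(2s·log(2/δ))⌉, sup_{x ∈ [-1,1]} |p_{s,d}(x) - x^s| ≤ δ. -/

import Mathlib

open Finset Polynomial Polynomial.Chebyshev in
private lemma natDegree_T_le_aux (m : ℕ) : (T ℝ (m : ℤ)).natDegree ≤ m := by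
  induction m using Nat.strong_induction_on with
  | _ m ih =>
    match m with
    | 0 => simp [T_zero]
    | 1 => simp [T_one]
    | (k+2) =>
      have h : ((k + 2 : ℕ) : ℤ) = (k : ℤ) + 2 := by push_cast; ring
      rw [h, T_add_two]
      refine (natDegree_sub_le _ _).trans ?_
      have h1 : (2 * X * T ℝ ((k:ℤ)+1)).natDegree ≤ k + 2 := by
        refine (natDegree_mul_le).trans ?_
        have : ((k:ℤ)+1) = ((k+1 : ℕ) : ℤ) := by push_cast; ring
        have h2 := ih (k+1) (by omega)
        rw [this]
        have h3 : (2 * X : Polynomial ℝ).natDegree ≤ 1 :=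
          (natDegree_mul_le).trans (by simp)
        omega
      have h2 : (T ℝ (k:ℤ)).natDegree ≤ k + 2 := (ih k (by omega)).trans (by omega)
      simp [h1, h2]

open Finset Polynomial Polynomial.Chebyshev in
private lemma natDegree_T_le_aux' (n : ℤ) : (T ℝ n).natDegree ≤ n.natAbs := by
  rw [← T_natAbs]; exact natDegree_T_le_aux n.natAbs

open Finset Polynomial Polynomial.Chebyshev in
private lemma abs_T_eval_le_aux (n : ℤ) (x : ℝ) (hx : x ∈ Set.Icc (-1 : ℝ) 1) :
    |(T ℝ n).eval x| ≤ 1 := by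
  obtain ⟨h1, h2⟩ := hx
  have : x = Real.cos (Real.arccos x) := (Real.cos_arccos h1 h2).symm
  rw [this, T_real_cos]
  exact Real.abs_cos_le_one _

open Finset Polynomial Polynomial.Chebyshev in
private lemma cheb_identity_aux (s : ℕ) :
    ∑ σ : Fin s → Bool, T ℝ (∑ i, if σ i then (1 : ℤ) else -1)
      = (2 : Polynomial ℝ) ^ s * X ^ s := by
  induction s with
  | zero => simp [T_zero]
  | succ s ih =>
    rw [← (Fin.consEquiv (fun _ : Fin (s+1) => Bool)).sum_comp]
    rw [Fintype.sum_prod_type]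
    have key : ∀ (b : Bool) (τ : Fin s → Bool),
        (∑ i, if (Fin.consEquiv (fun _ : Fin (s+1) => Bool)) (b, τ) i then (1 : ℤ) else -1)
          = (if b then (1:ℤ) else -1) + ∑ i, if τ i then (1 : ℤ) else -1 := by
      intro b τ
      simp [Fin.consEquiv, Fin.sum_univ_succ]
    have step : ∀ n : ℤ, T ℝ (n + 1) + T ℝ (n + -1) = 2 * X * T ℝ n := by
      intro n
      have := T_mul_T ℝ 1 n
      rw [T_one] at this
      have hneg : T ℝ (1 - n) = T ℝ (n - 1) := by
        rw [show (1 - n) = -(n-1) by ring, T_neg]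
      rw [hneg] at this
      rw [show n + -1 = n - 1 by ring, add_comm n 1, ← this]
    calc ∑ b : Bool, ∑ τ : Fin s → Bool,
          T ℝ (∑ i, if (Fin.consEquiv (fun _ : Fin (s+1) => Bool)) (b, τ) i then (1 : ℤ) else -1)
        = ∑ τ : Fin s → Bool, 2 * X * T ℝ (∑ i, if τ i then (1 : ℤ) else -1) := by
          rw [Fintype.sum_bool]
          simp only [key]
          rw [← Finset.sum_add_distrib]
          refine Finset.sum_congr rfl fun τ _ => ?_
          norm_num
          rw [add_comm ((1:ℤ)) _, add_comm ((-1:ℤ)) _]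
          exact step _
      _ = (2 : Polynomial ℝ) ^ (s+1) * X ^ (s+1) := by
          rw [← Finset.mul_sum, ih]; ring

open Finset in
private lemma sum_exp_eq_aux (s : ℕ) (t : ℝ) :
    ∑ σ : Fin s → Bool, Real.exp (t * ((∑ i, if σ i then (1:ℤ) else -1 : ℤ) : ℝ))
      = (Real.exp t + Real.exp (-t)) ^ s := by
  have hcast : ∀ σ : Fin s → Bool,
      ((∑ i, if σ i then (1:ℤ) else -1 : ℤ) : ℝ) = ∑ i, (if σ i then (1:ℝ) else -1) := by
    intro σ; push_cast [apply_ite (fun z : ℤ => (z : ℝ))]; rfl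
  calc ∑ σ : Fin s → Bool, Real.exp (t * ((∑ i, if σ i then (1:ℤ) else -1 : ℤ) : ℝ))
      = ∑ σ : Fin s → Bool, ∏ i, Real.exp (t * (if σ i then (1:ℝ) else -1)) := by
        refine Finset.sum_congr rfl fun σ _ => ?_
        rw [hcast, Finset.mul_sum, Real.exp_sum]
    _ = ∏ i : Fin s, ∑ b : Bool, Real.exp (t * (if b then (1:ℝ) else -1)) := by
        rw [Finset.prod_univ_sum]
        rw [Fintype.piFinset_univ]
    _ = (Real.exp t + Real.exp (-t)) ^ s := by
        have h : ∀ i : Fin s, (∑ b : Bool, Real.exp (t * (if b then (1:ℝ) else -1)))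
            = Real.exp t + Real.exp (-t) := fun i => by
          rw [Fintype.sum_bool]; norm_num
        rw [Finset.prod_congr rfl (fun i _ => h i), Finset.prod_const, Finset.card_univ,
          Fintype.card_fin]

open Finset in
private lemma chernoff_pos_aux (s d : ℕ) (hs : 0 < s) :
    ((univ.filter (fun σ : Fin s → Bool =>
        (d:ℤ) < ∑ i, if σ i then (1:ℤ) else -1)).card : ℝ)
      ≤ 2 ^ s * Real.exp (-(d:ℝ)^2 / (2*s)) := by
  set S : (Fin s → Bool) → ℤ := fun σ => ∑ i, if σ i then (1:ℤ) else -1 with hS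
  set t : ℝ := (d : ℝ) / s with ht
  have hs' : (0:ℝ) < s := by exact_mod_cast hs
  have htn : 0 ≤ t := by positivity
  have step1 : ((univ.filter (fun σ => (d:ℤ) < S σ)).card : ℝ)
      ≤ ∑ σ : Fin s → Bool, Real.exp (t * ((S σ : ℝ) - d)) := by
    rw [Finset.card_eq_sum_ones]
    push_cast
    calc (∑ σ ∈ univ.filter (fun σ => (d:ℤ) < S σ), (1:ℝ))
        ≤ ∑ σ ∈ univ.filter (fun σ => (d:ℤ) < S σ), Real.exp (t * ((S σ : ℝ) - d)) := by
          refine Finset.sum_le_sum fun σ hσ => ?_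
          rw [Finset.mem_filter] at hσ
          have : (d:ℝ) ≤ (S σ : ℝ) := by exact_mod_cast le_of_lt hσ.2
          exact Real.one_le_exp (by nlinarith)
      _ ≤ ∑ σ : Fin s → Bool, Real.exp (t * ((S σ : ℝ) - d)) :=
          Finset.sum_le_sum_of_subset_of_nonneg (Finset.filter_subset _ _)
            (fun _ _ _ => (Real.exp_pos _).le)
  have step2 : ∑ σ : Fin s → Bool, Real.exp (t * ((S σ : ℝ) - d))
      = (Real.exp t + Real.exp (-t)) ^ s * Real.exp (-(t * d)) := by
    rw [← sum_exp_eq_aux s t, Finset.sum_mul]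
    refine Finset.sum_congr rfl fun σ _ => ?_
    rw [← Real.exp_add]; congr 1; simp only [hS]; ring
  have step3 : (Real.exp t + Real.exp (-t)) ^ s * Real.exp (-(t * d))
      ≤ (2 * Real.exp (t^2/2)) ^ s * Real.exp (-(t * d)) := by
    have h1 : Real.exp t + Real.exp (-t) ≤ 2 * Real.exp (t^2/2) := by
      have := Real.cosh_le_exp_half_sq t
      rw [Real.cosh_eq] at this
      linarith
    exact mul_le_mul_of_nonneg_right
      (pow_le_pow_left₀ (by positivity) h1 s) (Real.exp_pos _).le
  have step4 : (2 * Real.exp (t^2/2)) ^ s * Real.exp (-(t * d))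
      = 2 ^ s * Real.exp (-(d:ℝ)^2 / (2*s)) := by
    rw [mul_pow, ← Real.exp_nat_mul, mul_assoc, ← Real.exp_add]
    congr 1
    rw [ht]
    field_simp
    ring
  linarith

open Finset in
private lemma card_bad_le_aux (s d : ℕ) (hs : 0 < s) :
    ((univ.filter (fun σ : Fin s → Bool =>
        ¬ |∑ i, if σ i then (1:ℤ) else -1| ≤ (d:ℤ))).card : ℝ)
      ≤ 2 ^ s * (2 * Real.exp (-(d:ℝ)^2 / (2*s))) := by
  set S : (Fin s → Bool) → ℤ := fun σ => ∑ i, if σ i then (1:ℤ) else -1 with hS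
  have hval : ∀ σ : Fin s → Bool, S (fun i => !(σ i)) = -S σ := by
    intro σ
    rw [hS]
    simp only
    rw [← Finset.sum_neg_distrib]
    refine Finset.sum_congr rfl fun i _ => ?_
    by_cases h : σ i = true <;> simp [h]
  have hsplit : (univ.filter (fun σ : Fin s → Bool => ¬ |S σ| ≤ (d:ℤ)))
      ⊆ (univ.filter (fun σ => (d:ℤ) < S σ)) ∪ (univ.filter (fun σ => S σ < -(d:ℤ))) := by
    intro σ hσ
    rw [Finset.mem_filter] at hσ
    rw [Finset.mem_union, Finset.mem_filter, Finset.mem_filter]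
    rcases lt_abs.mp (not_le.mp hσ.2) with h | h
    · exact Or.inl ⟨Finset.mem_univ _, h⟩
    · exact Or.inr ⟨Finset.mem_univ _, by omega⟩
  have hneg : (univ.filter (fun σ : Fin s → Bool => S σ < -(d:ℤ))).card
      = (univ.filter (fun σ : Fin s → Bool => (d:ℤ) < S σ)).card := by
    apply Finset.card_bij' (fun σ _ => fun i => !(σ i)) (fun σ _ => fun i => !(σ i))
    · intro σ hσ
      rw [Finset.mem_filter] at hσ ⊢
      refine ⟨Finset.mem_univ _, ?_⟩
      rw [hval]; omega
    · intro σ hσ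
      rw [Finset.mem_filter] at hσ ⊢
      refine ⟨Finset.mem_univ _, ?_⟩
      rw [hval]; omega
    · intro σ _; funext i; simp
    · intro σ _; funext i; simp
  have h1 := Finset.card_le_card hsplit
  have h2 := Finset.card_union_le (univ.filter (fun σ : Fin s → Bool => (d:ℤ) < S σ))
    (univ.filter (fun σ : Fin s → Bool => S σ < -(d:ℤ)))
  have h3 := chernoff_pos_aux s d hs
  have h4 : ((univ.filter (fun σ : Fin s → Bool => ¬ |S σ| ≤ (d:ℤ))).card : ℝ)
      ≤ 2 * ((univ.filter (fun σ : Fin s → Bool => (d:ℤ) < S σ)).card : ℝ) := by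
    have := h1.trans h2
    rw [hneg] at this
    exact_mod_cast by omega
  linarith

open Finset in
/-- The truncated Chebyshev expansion `p_{s,d}` of `x^s` has degree at most `d` and approximates
`x^s` on `[-1,1]` up to `2·exp(-d²/(2s))`; in particular up to `δ` once
`d ≥ ⌈√(2s·log(2/δ))⌉`. -/
theorem monomial_approx_by_low_degree (s d : ℕ) (hs : 0 < s) (hd : 0 < d)
    (p : Polynomial ℝ)
    (hp : p = (2 : ℝ) ^ (-(s : ℤ)) •
      ∑ σ ∈ univ.filter
          (fun σ : Fin s → Bool => |∑ i, if σ i then (1 : ℤ) else -1| ≤ (d : ℤ)),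
        Polynomial.Chebyshev.T ℝ (∑ i, if σ i then (1 : ℤ) else -1)) :
    p.natDegree ≤ d ∧
    (∀ x ∈ Set.Icc (-1 : ℝ) 1,
      |p.eval x - x ^ s| ≤ 2 * Real.exp (-(d : ℝ) ^ 2 / (2 * s))) ∧
    (∀ δ : ℝ, 0 < δ → ⌈Real.sqrt (2 * s * Real.log (2 / δ))⌉ ≤ (d : ℤ) →
      ∀ x ∈ Set.Icc (-1 : ℝ) 1, |p.eval x - x ^ s| ≤ δ) := by
  have hs' : (0:ℝ) < s := by exact_mod_cast hs
  have h2s : (0:ℝ) < 2 ^ s := by positivity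
  have hpow : (2:ℝ) ^ (-(s:ℤ)) = ((2:ℝ)^s)⁻¹ := by
    rw [zpow_neg, zpow_natCast]
  -- main error bound
  have hmain : ∀ x ∈ Set.Icc (-1 : ℝ) 1,
      |p.eval x - x ^ s| ≤ 2 * Real.exp (-(d : ℝ) ^ 2 / (2 * s)) := by
    intro x hx
    have hxs : (2:ℝ)^s * x^s
        = ∑ σ : Fin s → Bool, (Polynomial.Chebyshev.T ℝ
            (∑ i, if σ i then (1:ℤ) else -1)).eval x := by
      have := congrArg (Polynomial.eval x) (cheb_identity_aux s)
      rw [Polynomial.eval_finset_sum] at this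
      simpa using this.symm
    have hpe : p.eval x = ((2:ℝ)^s)⁻¹ *
        ∑ σ ∈ univ.filter
          (fun σ : Fin s → Bool => |∑ i, if σ i then (1 : ℤ) else -1| ≤ (d : ℤ)),
        (Polynomial.Chebyshev.T ℝ (∑ i, if σ i then (1:ℤ) else -1)).eval x := by
      rw [hp, Polynomial.eval_smul, smul_eq_mul, hpow, Polynomial.eval_finset_sum]
    have hsplit := Finset.sum_filter_add_sum_filter_not univ
      (fun σ : Fin s → Bool => |∑ i, if σ i then (1 : ℤ) else -1| ≤ (d : ℤ))
      (fun σ => (Polynomial.Chebyshev.T ℝ (∑ i, if σ i then (1:ℤ) else -1)).eval x)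
    have hdiff : p.eval x - x^s
        = -(((2:ℝ)^s)⁻¹ * ∑ σ ∈ univ.filter
            (fun σ : Fin s → Bool => ¬ |∑ i, if σ i then (1 : ℤ) else -1| ≤ (d : ℤ)),
          (Polynomial.Chebyshev.T ℝ (∑ i, if σ i then (1:ℤ) else -1)).eval x) := by
      have hx2 : x^s = ((2:ℝ)^s)⁻¹ *
          ∑ σ : Fin s → Bool, (Polynomial.Chebyshev.T ℝ
            (∑ i, if σ i then (1:ℤ) else -1)).eval x := by
        rw [← hxs, ← mul_assoc, inv_mul_cancel₀ h2s.ne', one_mul]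
      rw [hpe, hx2, ← hsplit]
      ring
    have hb1 : |∑ σ ∈ univ.filter
            (fun σ : Fin s → Bool => ¬ |∑ i, if σ i then (1 : ℤ) else -1| ≤ (d : ℤ)),
          (Polynomial.Chebyshev.T ℝ (∑ i, if σ i then (1:ℤ) else -1)).eval x|
        ≤ ((univ.filter
            (fun σ : Fin s → Bool => ¬ |∑ i, if σ i then (1 : ℤ) else -1| ≤ (d : ℤ))).card : ℝ) := by
      refine (Finset.abs_sum_le_sum_abs _ _).trans ?_
      calc ∑ σ ∈ univ.filter
            (fun σ : Fin s → Bool => ¬ |∑ i, if σ i then (1 : ℤ) else -1| ≤ (d : ℤ)),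
          |(Polynomial.Chebyshev.T ℝ (∑ i, if σ i then (1:ℤ) else -1)).eval x|
          ≤ ∑ σ ∈ univ.filter
            (fun σ : Fin s → Bool => ¬ |∑ i, if σ i then (1 : ℤ) else -1| ≤ (d : ℤ)), (1:ℝ) :=
            Finset.sum_le_sum fun σ _ => abs_T_eval_le_aux _ x hx
        _ = _ := by simp
    have hb2 := card_bad_le_aux s d hs
    calc |p.eval x - x^s|
        = ((2:ℝ)^s)⁻¹ * |∑ σ ∈ univ.filter
            (fun σ : Fin s → Bool => ¬ |∑ i, if σ i then (1 : ℤ) else -1| ≤ (d : ℤ)),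
          (Polynomial.Chebyshev.T ℝ (∑ i, if σ i then (1:ℤ) else -1)).eval x| := by
          rw [hdiff, abs_neg, abs_mul, abs_of_pos (inv_pos.mpr h2s)]
      _ ≤ ((2:ℝ)^s)⁻¹ * ((2:ℝ)^s * (2 * Real.exp (-(d : ℝ) ^ 2 / (2 * s)))) := by
          refine mul_le_mul_of_nonneg_left (hb1.trans ?_) (inv_pos.mpr h2s).le
          exact hb2
      _ = 2 * Real.exp (-(d : ℝ) ^ 2 / (2 * s)) := by
          rw [← mul_assoc, inv_mul_cancel₀ h2s.ne', one_mul]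
  refine ⟨?_, hmain, ?_⟩
  · -- degree bound
    rw [hp]
    refine (Polynomial.natDegree_smul_le _ _).trans ?_
    refine Polynomial.natDegree_sum_le_of_forall_le _ _ fun σ hσ => ?_
    rw [Finset.mem_filter] at hσ
    refine (natDegree_T_le_aux' _).trans ?_
    have := abs_le.mp hσ.2
    omega
  · -- the δ version
    intro δ hδ hceil x hx
    have hd' : Real.sqrt (2 * s * Real.log (2 / δ)) ≤ (d:ℝ) := by
      refine (Int.le_ceil _).trans ?_
      exact_mod_cast hceil
    have hexp : 2 * Real.exp (-(d:ℝ)^2 / (2*s)) ≤ δ := by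
      by_cases hL : Real.log (2/δ) ≤ 0
      · have h2δ : 2/δ ≤ 1 := by
          by_contra hc
          push_neg at hc
          exact absurd (Real.log_pos hc) (not_lt.mpr hL)
        have hδ2 : 2 ≤ δ := by
          rw [div_le_one hδ] at h2δ; exact h2δ
        have harg : -(d:ℝ)^2 / (2*s) ≤ 0 := by
          rw [neg_div]
          simp only [neg_nonpos]
          positivity
        have := Real.exp_le_one_iff.mpr harg
        linarith
      · push_neg at hL
        have hL2 : (0:ℝ) ≤ 2 * s * Real.log (2/δ) := by positivity
        have hsq : 2 * (s:ℝ) * Real.log (2/δ) ≤ (d:ℝ)^2 := by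
          have h1 := Real.sq_sqrt hL2
          nlinarith [Real.sqrt_nonneg (2 * (s:ℝ) * Real.log (2/δ))]
        have harg : -(d:ℝ)^2 / (2*s) ≤ -Real.log (2/δ) := by
          rw [div_le_iff₀ (by positivity : (0:ℝ) < 2*s)]
          nlinarith
        have h1 : Real.exp (-(d:ℝ)^2 / (2*s)) ≤ Real.exp (-Real.log (2/δ)) :=
          Real.exp_le_exp.mpr harg
        have h2 : Real.exp (-Real.log (2/δ)) = δ/2 := by
          rw [Real.exp_neg, Real.exp_log (by positivity), inv_div]
        linarith
    exact (hmain x hx).trans hexp
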